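/- Let m, n ≥ 1 and let a⁽ⁱ⁾_μ (for i = 1, …, m and μ = 1, …, n) be real numbers with a⁽ⁱ⁾_μ ≥ 1 for all i and μ. Then ∏_{μ=1}^{n} ( Σ_{i=1}^{m} a⁽ⁱ⁾_μ − (m − 1) ) ≥ Σ_{i=1}^{m} ∏_{μ=1}^{n} a⁽ⁱ⁾_μ − (m − 1). -/
import Mathlib

lemma key_two {m : ℕ} (x y : Fin m → ℝ) (hx : ∀ i, 1 ≤ x i) (hy : ∀ i, 1 ≤ y i) :
    (∑ i, x i * y i) - ((m : ℝ) - 1) ≤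
      ((∑ i, x i) - ((m : ℝ) - 1)) * ((∑ i, y i) - ((m : ℝ) - 1)) := by
  have hu : ∀ i, 0 ≤ x i - 1 := fun i => by linarith [hx i]
  have hv : ∀ i, 0 ≤ y i - 1 := fun i => by linarith [hy i]
  have hU : ∑ i, x i = (∑ i, (x i - 1)) + m := by
    rw [Finset.sum_sub_distrib]; simp
  have hV : ∑ i, y i = (∑ i, (y i - 1)) + m := by
    rw [Finset.sum_sub_distrib]; simp
  have hXY : ∑ i, x i * y i =
      (∑ i, (x i - 1) * (y i - 1)) + (∑ i, (x i - 1)) + (∑ i, (y i - 1)) + m := by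
    have h : ∀ i ∈ Finset.univ, x i * y i =
        (x i - 1) * (y i - 1) + ((x i - 1) + ((y i - 1) + 1)) := fun i _ => by ring
    rw [Finset.sum_congr rfl h, Finset.sum_add_distrib, Finset.sum_add_distrib,
      Finset.sum_add_distrib]
    simp; ring
  have hW : ∑ i, (x i - 1) * (y i - 1) ≤ (∑ i, (x i - 1)) * (∑ i, (y i - 1)) := by
    calc ∑ i, (x i - 1) * (y i - 1)
        ≤ ∑ i, (x i - 1) * (∑ j, (y j - 1)) :=
          Finset.sum_le_sum fun i _ => mul_le_mul_of_nonneg_left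
            (Finset.single_le_sum (fun j _ => hv j) (Finset.mem_univ i)) (hu i)
      _ = (∑ i, (x i - 1)) * (∑ i, (y i - 1)) := by rw [← Finset.sum_mul]
  rw [hU, hV, hXY]
  nlinarith [hW]

/-- **Lemma 3.1.** If `a⁽ⁱ⁾_μ ≥ 1` for all `i = 1,…,m` and `μ = 1,…,n`, then
`∏_μ (∑_i a⁽ⁱ⁾_μ − (m−1)) ≥ ∑_i ∏_μ a⁽ⁱ⁾_μ − (m−1)`. -/
theorem prod_sum_sub_ge_sum_prod_sub {m n : ℕ} (hm : 1 ≤ m) (hn : 1 ≤ n)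
    (a : Fin m → Fin n → ℝ) (ha : ∀ i μ, 1 ≤ a i μ) :
    ∏ μ, ((∑ i, a i μ) - ((m : ℝ) - 1)) ≥ (∑ i, ∏ μ, a i μ) - ((m : ℝ) - 1) := by
  induction n, hn using Nat.le_induction with
  | base => simp
  | succ n hn ih =>
    set c : ℝ := (m : ℝ) - 1 with hc
    have prodrest : ∀ i, 1 ≤ ∏ μ : Fin n, a i μ.castSucc :=
      fun i => by
        have := Finset.prod_le_prod (s := Finset.univ) (f := fun _ : Fin n => (1 : ℝ))
          (g := fun μ => a i μ.castSucc) (fun _ _ => zero_le_one) (fun μ _ => ha i μ.castSucc)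
        simpa using this
    have hB : (1 : ℝ) ≤ (∑ i, ∏ μ : Fin n, a i μ.castSucc) - c := by
      have : (m : ℝ) ≤ ∑ i, ∏ μ : Fin n, a i μ.castSucc := by
        calc (m : ℝ) = ∑ _i : Fin m, (1 : ℝ) := by simp
          _ ≤ _ := Finset.sum_le_sum fun i _ => prodrest i
      simp [hc]; linarith
    have hlast : (1 : ℝ) ≤ (∑ i, a i (Fin.last n)) - c := by
      have : (m : ℝ) ≤ ∑ i, a i (Fin.last n) := by
        calc (m : ℝ) = ∑ _i : Fin m, (1 : ℝ) := by simp
          _ ≤ _ := Finset.sum_le_sum fun i _ => ha i (Fin.last n)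
      simp [hc]; linarith
    have ihA := ih (fun i μ => a i μ.castSucc) (fun i μ => ha i μ.castSucc)
    rw [Fin.prod_univ_castSucc]
    have h1 : ((∑ i, ∏ μ : Fin n, a i μ.castSucc) - c) * ((∑ i, a i (Fin.last n)) - c)
        ≤ (∏ μ : Fin n, ((∑ i, a i μ.castSucc) - c)) * ((∑ i, a i (Fin.last n)) - c) :=
      mul_le_mul_of_nonneg_right ihA (by linarith)
    have h2 := key_two (fun i => ∏ μ : Fin n, a i μ.castSucc)
      (fun i => a i (Fin.last n)) prodrest (fun i => ha i (Fin.last n))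
    have heq : ∀ i, (∏ μ : Fin n, a i μ.castSucc) * a i (Fin.last n)
        = ∏ μ : Fin (n + 1), a i μ := fun i => (Fin.prod_univ_castSucc (a i)).symm
    simp only [heq] at h2
    calc (∑ i, ∏ μ : Fin (n+1), a i μ) - c
        ≤ ((∑ i, ∏ μ : Fin n, a i μ.castSucc) - c) * ((∑ i, a i (Fin.last n)) - c) := h2
      _ ≤ _ := h1
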